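/- For a vector field X = a(λ)∂_λ on ℂ, its action on the function I(λ, λ_ε, λ_εε, λ_εεε) = R(λ)λ_ε² + λ_εεε/λ_ε − (3/2)(λ_εε/λ_ε)² via the third-order prolongation X⁽³⁾ is given by X⁽³⁾I = (a''' + 2R a' + R' a)·λ_ε². -/

import Mathlib

/-- The differential invariant `I = R(λ)λ_ε² + λ_εεε/λ_ε − (3/2)(λ_εε/λ_ε)²` on the
third order frame bundle of `ℂ`. -/
noncomputable def invariantI (R : ℂ → ℂ) (l le lee leee : ℂ) : ℂ :=
  R l * le ^ 2 + leee / le - (3 / 2) * (lee / le) ^ 2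

/-- The action of the third prolongation `X⁽³⁾` of `X = a(λ)∂_λ` on the invariant `I`
is `X⁽³⁾I = (a''' + 2R a' + R' a)·λ_ε²`. -/
theorem prolongation_action_on_invariant (R a : ℂ → ℂ)
    (hR : Differentiable ℂ R) (ha : Differentiable ℂ a)
    (ha' : Differentiable ℂ (deriv a)) (ha'' : Differentiable ℂ (deriv (deriv a))) :
    ∀ l le lee leee : ℂ, le ≠ 0 →
      a l * deriv (fun t => invariantI R t le lee leee) l
      + (deriv a l * le) * deriv (fun t => invariantI R l t lee leee) le
      + (deriv (deriv a) l * le ^ 2 + deriv a l * lee)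
          * deriv (fun t => invariantI R l le t leee) lee
      + (deriv (deriv (deriv a)) l * le ^ 3
          + 3 * deriv (deriv a) l * le * lee + deriv a l * leee)
          * deriv (fun t => invariantI R l le lee t) leee
      = (deriv (deriv (deriv a)) l + 2 * R l * deriv a l + deriv R l * a l) * le ^ 2 := by
  intro l le lee leee hle
  have h1 : deriv (fun t => invariantI R t le lee leee) l = deriv R l * le ^ 2 := by
    have H : HasDerivAt (fun t => invariantI R t le lee leee) (deriv R l * le ^ 2) l := by
      unfold invariantI
      exact ((((hR l).hasDerivAt.mul_const (le ^ 2)).add_const (leee / le)).sub_const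
        (3 / 2 * (lee / le) ^ 2))
    exact H.deriv
  have h2 : deriv (fun t => invariantI R l t lee leee) le
      = 2 * R l * le - leee / le ^ 2 + 3 * lee ^ 2 / le ^ 3 := by
    have H : HasDerivAt (fun t => invariantI R l t lee leee)
        (2 * R l * le - leee / le ^ 2 + 3 * lee ^ 2 / le ^ 3) le := by
      unfold invariantI
      have hp : HasDerivAt (fun t : ℂ => t ^ 2) ((2 : ℕ) * le ^ 1) le := hasDerivAt_pow 2 le
      have h1 := (hp.const_mul (R l)).add
        (((hasDerivAt_const le leee).div (hasDerivAt_id le) hle))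
      have h2 := (((hasDerivAt_const le lee).div (hasDerivAt_id le) hle).pow 2).const_mul
        ((3 : ℂ) / 2)
      have := h1.sub h2
      refine this.congr_deriv ?_
      simp only [id_eq, Pi.div_apply]
      push_cast
      field_simp
      ring
    exact H.deriv
  have h3 : deriv (fun t => invariantI R l le t leee) lee = -3 * lee / le ^ 2 := by
    have H : HasDerivAt (fun t => invariantI R l le t leee) (-3 * lee / le ^ 2) lee := by
      unfold invariantI
      have h2 := (((hasDerivAt_id lee).div_const le).pow 2).const_mul ((3 : ℂ) / 2)
      have := ((hasDerivAt_const lee (R l * le ^ 2 + leee / le))).sub h2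
      refine this.congr_deriv ?_
      simp only [id_eq, Pi.div_apply]
      push_cast
      field_simp
      ring
    exact H.deriv
  have h4 : deriv (fun t => invariantI R l le lee t) leee = 1 / le := by
    have H : HasDerivAt (fun t => invariantI R l le lee t) (1 / le) leee := by
      unfold invariantI
      have := (((hasDerivAt_id leee).div_const le).const_add (R l * le ^ 2)).sub_const
        (3 / 2 * (lee / le) ^ 2)
      simpa using this
    exact H.deriv
  rw [h1, h2, h3, h4]
  field_simp
  ring
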